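/- Among all e-variables with respect to a distribution P on a finite set Y, the inverse-probability e-variable e_y = 1/(|Y|·P(y)) uniquely maximizes the expected sum of log-e-values over all labels, i.e., uniquely maximizes Σ_{y'∈Y} ln f(y') over all functions f : Y → (0,∞) satisfying Σ_y P(y) f(y) ≤ 1. -/

import Mathlib

open scoped BigOperators

/-- The inverse-probability e-variable `e(y) = 1/(|Y|·P(y))` uniquely maximizes the
sum of log-e-values over all labels, `Σ_{y'} ln f(y')`, over all `f : Y → (0,∞)` with
`Σ_y P(y) f(y) ≤ 1`. -/
theorem inverse_probability_e_value_optimal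
    {Y : Type*} [Fintype Y] [Nonempty Y]
    (P : Y → ℝ) (hP : ∀ y, 0 < P y) (hsum : ∑ y, P y = 1)
    (e : Y → ℝ) (he : ∀ y, e y = 1 / ((Fintype.card Y : ℝ) * P y))
    (f : Y → ℝ) (hf : ∀ y, 0 < f y) (hfe : ∑ y, P y * f y ≤ 1) :
    (∑ y', Real.log (f y')) ≤ (∑ y', Real.log (e y')) ∧
    ((∑ y', Real.log (f y')) = (∑ y', Real.log (e y')) → f = e) := by
  set n : ℝ := (Fintype.card Y : ℝ) with hn
  have hn0 : 0 < n := by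
    rw [hn]; exact_mod_cast Fintype.card_pos (α := Y)
  set g : Y → ℝ := fun y => n * (P y * f y) with hg
  have hg0 : ∀ y, 0 < g y := fun y =>
    mul_pos hn0 (mul_pos (hP y) (hf y))
  have key : ∀ y, Real.log (f y) = Real.log (g y) + Real.log (e y) := by
    intro y
    rw [he y, one_div, Real.log_inv, hg]
    rw [Real.log_mul hn0.ne' (mul_pos (hP y) (hf y)).ne',
        Real.log_mul (hP y).ne' (hf y).ne',
        Real.log_mul hn0.ne' (hP y).ne']
    ring
  have hsplit : (∑ y', Real.log (f y')) =
      (∑ y', Real.log (g y')) + (∑ y', Real.log (e y')) := by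
    rw [← Finset.sum_add_distrib]
    exact Finset.sum_congr rfl fun y _ => key y
  have h1 : ∀ y, Real.log (g y) ≤ g y - 1 :=
    fun y => Real.log_le_sub_one_of_pos (hg0 y)
  have hsumg : ∑ y, g y ≤ n := by
    have : ∑ y, g y = n * ∑ y, P y * f y := by
      rw [Finset.mul_sum]
    rw [this]
    calc n * ∑ y, P y * f y ≤ n * 1 := by
          exact mul_le_mul_of_nonneg_left hfe hn0.le
      _ = n := mul_one n
  have h2 : ∑ y, (g y - 1) ≤ 0 := by
    rw [Finset.sum_sub_distrib, Finset.sum_const, nsmul_eq_mul, mul_one]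
    have : ((Fintype.card Y : ℝ)) = n := rfl
    simp only [Finset.card_univ]
    linarith [hsumg]
  have h3 : ∑ y, Real.log (g y) ≤ 0 :=
    (Finset.sum_le_sum fun y _ => h1 y).trans h2
  constructor
  · linarith [hsplit]
  · intro heq
    have hzero : ∑ y, Real.log (g y) = 0 := by linarith [hsplit]
    have hsums : ∑ y, Real.log (g y) = ∑ y, (g y - 1) := by
      have hle : ∑ y, Real.log (g y) ≤ ∑ y, (g y - 1) :=
        Finset.sum_le_sum (fun y _ => h1 y)
      linarith
    have hall : ∀ y ∈ Finset.univ, Real.log (g y) = g y - 1 := by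
      by_contra hc
      push_neg at hc
      obtain ⟨y₀, hy₀, hne⟩ := hc
      have hstrict : Real.log (g y₀) < g y₀ - 1 := lt_of_le_of_ne (h1 y₀) hne
      have := Finset.sum_lt_sum (fun y _ => h1 y) ⟨y₀, hy₀, hstrict⟩
      linarith
    have hgy : ∀ y, g y = 1 := by
      intro y
      by_contra hgne
      have := Real.log_lt_sub_one_of_pos (hg0 y) hgne
      have := hall y (Finset.mem_univ y)
      linarith
    funext y
    have := hgy y
    rw [he y]
    have hnP : n * P y ≠ 0 := (mul_pos hn0 (hP y)).ne'
    have hPy : P y ≠ 0 := (hP y).ne'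
    field_simp
    rw [hg] at this
    linear_combination this
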